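/- Assume b = e and b ≠ 0 (with a, d ∈ ℝ arbitrary). Let u be a solution of the Longstaff–Schwartz equation on Ω, and let ε ∈ ℝ. Then the function w(x,y,t) = u( x/(1 − bε·e^{-bt}), y/(1 − bε·e^{-bt}), t + ln(1 − bε·e^{-bt})/b ) satisfies the Longstaff–Schwartz equation at every point (x,y,t) ∈ Ω with 1 − bε·e^{-bt} > 0. -/

import Mathlib

/-- Partial derivative in `x`. -/
noncomputable def pdX (u : ℝ → ℝ → ℝ → ℝ) (x y t : ℝ) : ℝ := deriv (fun z => u z y t) x

/-- Partial derivative in `y`. -/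
noncomputable def pdY (u : ℝ → ℝ → ℝ → ℝ) (x y t : ℝ) : ℝ := deriv (fun z => u x z t) y

/-- Partial derivative in `t`. -/
noncomputable def pdT (u : ℝ → ℝ → ℝ → ℝ) (x y t : ℝ) : ℝ := deriv (fun z => u x y z) t

/-- Second partial derivative in `x`. -/
noncomputable def pdXX (u : ℝ → ℝ → ℝ → ℝ) (x y t : ℝ) : ℝ := deriv (fun z => pdX u z y t) x

/-- Second partial derivative in `y`. -/
noncomputable def pdYY (u : ℝ → ℝ → ℝ → ℝ) (x y t : ℝ) : ℝ := deriv (fun z => pdY u x z t) y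

/-- The domain `Ω = {(x,y,t) : x > 0, y > 0}`. -/
def Omega : Set (ℝ × ℝ × ℝ) := {p | 0 < p.1 ∧ 0 < p.2.1}

/-- The Longstaff–Schwartz (Kolmogorov backward) equation
`u_t = −((a−bx)·u_x + (d−ey)·u_y + (x/2)·u_xx + (y/2)·u_yy)` holds at the point `(x,y,t)`. -/
def LSEq (a b d e : ℝ) (u : ℝ → ℝ → ℝ → ℝ) (x y t : ℝ) : Prop :=
  pdT u x y t =
    -((a - b * x) * pdX u x y t + (d - e * y) * pdY u x y t +
      x / 2 * pdXX u x y t + y / 2 * pdYY u x y t)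

/-- `u` is a solution of the Longstaff–Schwartz equation on `Ω`: it is C² on `Ω` and
satisfies the equation at every point of `Ω`. -/
def IsLSSolution (a b d e : ℝ) (u : ℝ → ℝ → ℝ → ℝ) : Prop :=
  ContDiffOn ℝ 2 (fun p : ℝ × ℝ × ℝ => u p.1 p.2.1 p.2.2) Omega ∧
  ∀ x y t : ℝ, 0 < x → 0 < y → LSEq a b d e u x y t

noncomputable def Uf (u : ℝ → ℝ → ℝ → ℝ) : ℝ × ℝ × ℝ → ℝ := fun p => u p.1 p.2.1 p.2.2

lemma hasDerivAt_slice_x (u : ℝ → ℝ → ℝ → ℝ) {x y t : ℝ}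
    (h : DifferentiableAt ℝ (Uf u) (x, y, t)) :
    HasDerivAt (fun z => u z y t) (fderiv ℝ (Uf u) (x, y, t) (1, 0, 0)) x := by
  have h1 : HasDerivAt (fun z : ℝ => ((z, y, t) : ℝ × ℝ × ℝ)) (1, 0, 0) x :=
    (hasDerivAt_id x).prodMk ((hasDerivAt_const x y).prodMk (hasDerivAt_const x t))
  simpa [Uf, Function.comp_def] using h.hasFDerivAt.comp_hasDerivAt x h1

lemma hasDerivAt_slice_y (u : ℝ → ℝ → ℝ → ℝ) {x y t : ℝ}
    (h : DifferentiableAt ℝ (Uf u) (x, y, t)) :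
    HasDerivAt (fun z => u x z t) (fderiv ℝ (Uf u) (x, y, t) (0, 1, 0)) y := by
  have h1 : HasDerivAt (fun z : ℝ => ((x, z, t) : ℝ × ℝ × ℝ)) (0, 1, 0) y :=
    (hasDerivAt_const y x).prodMk ((hasDerivAt_id y).prodMk (hasDerivAt_const y t))
  simpa [Uf, Function.comp_def] using h.hasFDerivAt.comp_hasDerivAt y h1

lemma hasDerivAt_slice_t (u : ℝ → ℝ → ℝ → ℝ) {x y t : ℝ}
    (h : DifferentiableAt ℝ (Uf u) (x, y, t)) :
    HasDerivAt (fun z => u x y z) (fderiv ℝ (Uf u) (x, y, t) (0, 0, 1)) t := by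
  have h1 : HasDerivAt (fun z : ℝ => ((x, y, z) : ℝ × ℝ × ℝ)) (0, 0, 1) t :=
    (hasDerivAt_const t x).prodMk ((hasDerivAt_const t y).prodMk (hasDerivAt_id t))
  simpa [Uf, Function.comp_def] using h.hasFDerivAt.comp_hasDerivAt t h1

lemma isOpen_Omega : IsOpen Omega :=
  (isOpen_lt continuous_const continuous_fst).inter
    (isOpen_lt continuous_const (continuous_fst.comp continuous_snd))

/-- Symmetry of the Longstaff–Schwartz equation when `b = e ≠ 0` (subcase 2.2, group `G₂`). -/
theorem ls_symmetry_b_eq_e_G2 (a b d e : ℝ) (hbe : b = e) (hb : b ≠ 0)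
    (u : ℝ → ℝ → ℝ → ℝ) (hu : IsLSSolution a b d e u) (ε : ℝ) :
    ∀ x y t : ℝ, 0 < x → 0 < y → 1 - b * ε * Real.exp (-(b * t)) > 0 →
      LSEq a b d e
        (fun x y t =>
          u (x / (1 - b * ε * Real.exp (-(b * t)))) (y / (1 - b * ε * Real.exp (-(b * t))))
            (t + Real.log (1 - b * ε * Real.exp (-(b * t))) / b))
        x y t := by
  subst hbe
  intro x y t hx hy hφ
  set c : ℝ := b * ε * Real.exp (-(b * t)) with hc
  set φ : ℝ := 1 - c with hφdef
  have hφpos : (0:ℝ) < φ := hφ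
  set X : ℝ := x / φ with hXdef
  set Y : ℝ := y / φ with hYdef
  set T : ℝ := t + Real.log φ / b with hTdef
  have hX : 0 < X := div_pos hx hφpos
  have hY : 0 < Y := div_pos hy hφpos
  -- differentiability facts
  have hdAt : ∀ p q r : ℝ, 0 < p → 0 < q → DifferentiableAt ℝ (Uf u) (p, q, r) := by
    intro p q r hp hq
    exact (hu.1.contDiffAt (isOpen_Omega.mem_nhds ⟨hp, hq⟩)).differentiableAt
      (by norm_num)
  have hC2 : ContDiffAt ℝ 2 (Uf u) (X, Y, T) :=
    hu.1.contDiffAt (isOpen_Omega.mem_nhds ⟨hX, hY⟩)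
  have hf1 : ContDiffAt ℝ 1 (fderiv ℝ (Uf u)) (X, Y, T) :=
    hC2.fderiv_right (by norm_num)
  -- abbreviations
  set g : ℝ → ℝ := fun ζ => fderiv ℝ (Uf u) (ζ, Y, T) (1, 0, 0) with hgdef
  set h : ℝ → ℝ := fun η => fderiv ℝ (Uf u) (X, η, T) (0, 1, 0) with hhdef
  set ux : ℝ := g X with huxdef
  set uy : ℝ := h Y with huydef
  set ut : ℝ := fderiv ℝ (Uf u) (X, Y, T) (0, 0, 1) with hutdef
  -- differentiability of g at X and h at Y
  have hgdiff : DifferentiableAt ℝ g X := by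
    have hline : DifferentiableAt ℝ (fun ζ : ℝ => ((ζ, Y, T) : ℝ × ℝ × ℝ)) X :=
      differentiableAt_id.prodMk (differentiableAt_const _)
    have hfd : DifferentiableAt ℝ (fun ζ : ℝ => fderiv ℝ (Uf u) (ζ, Y, T)) X :=
      (hf1.differentiableAt one_ne_zero).comp X hline
    exact (ContinuousLinearMap.apply ℝ ℝ ((1:ℝ), (0:ℝ), (0:ℝ))).differentiableAt.comp X hfd
  have hhdiff : DifferentiableAt ℝ h Y := by
    have hline : DifferentiableAt ℝ (fun η : ℝ => ((X, η, T) : ℝ × ℝ × ℝ)) Y :=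
      (differentiableAt_const _).prodMk (differentiableAt_id.prodMk (differentiableAt_const _))
    have hfd : DifferentiableAt ℝ (fun η : ℝ => fderiv ℝ (Uf u) (X, η, T)) Y := by
      have : ContDiffAt ℝ 1 (fderiv ℝ (Uf u)) ((X, Y, T) : ℝ × ℝ × ℝ) := hf1
      exact (this.differentiableAt one_ne_zero).comp Y hline
    exact (ContinuousLinearMap.apply ℝ ℝ ((0:ℝ), (1:ℝ), (0:ℝ))).differentiableAt.comp Y hfd
  -- second partials of u at (X,Y,T)
  have hpdXu : ∀ ζ : ℝ, 0 < ζ → pdX u ζ Y T = g ζ := fun ζ hζ =>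
    (hasDerivAt_slice_x u (hdAt _ _ _ hζ hY)).deriv
  have hpdYu : ∀ η : ℝ, 0 < η → pdY u X η T = h η := fun η hη =>
    (hasDerivAt_slice_y u (hdAt _ _ _ hX hη)).deriv
  have hpdXXu : pdXX u X Y T = deriv g X := by
    apply Filter.EventuallyEq.deriv_eq
    filter_upwards [eventually_gt_nhds hX] with ζ hζ using hpdXu ζ hζ
  have hpdYYu : pdYY u X Y T = deriv h Y := by
    apply Filter.EventuallyEq.deriv_eq
    filter_upwards [eventually_gt_nhds hY] with η hη using hpdYu η hη
  -- equation for u at (X,Y,T)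
  have hEq : ut = -((a - b * X) * ux + (d - b * Y) * uy
      + X / 2 * deriv g X + Y / 2 * deriv h Y) := by
    have := hu.2 X Y T hX hY
    rw [LSEq] at this
    rw [hutdef, ← (hasDerivAt_slice_t u (hdAt _ _ _ hX hY)).deriv]
    rw [huxdef, ← hpdXu X hX, huydef, ← hpdYu Y hY, ← hpdXXu, ← hpdYYu]
    exact this
  
  -- name the transformed function
  -- (W is definitionally the lambda in the goal)
  -- key one-variable derivative facts for the x-slice and y-slice of W
  have hkeyx : ∀ z : ℝ, 0 < z → HasDerivAt (fun ζ : ℝ => u (ζ / φ) Y T)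
      (g (z / φ) * (1 / φ)) z := by
    intro z hz
    have h1 := hasDerivAt_slice_x u (hdAt (z / φ) Y T (div_pos hz hφpos) hY)
    have h2 : HasDerivAt (fun ζ : ℝ => ζ / φ) (1 / φ) z := by
      simpa using (hasDerivAt_id z).div_const φ
    exact h1.comp z h2
  have hkeyy : ∀ z : ℝ, 0 < z → HasDerivAt (fun η : ℝ => u X (η / φ) T)
      (h (z / φ) * (1 / φ)) z := by
    intro z hz
    have h1 := hasDerivAt_slice_y u (hdAt X (z / φ) T hX (div_pos hz hφpos))
    have h2 : HasDerivAt (fun η : ℝ => η / φ) (1 / φ) z := by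
      simpa using (hasDerivAt_id z).div_const φ
    exact h1.comp z h2
  set W : ℝ → ℝ → ℝ → ℝ := fun x y t =>
      u (x / (1 - b * ε * Real.exp (-(b * t)))) (y / (1 - b * ε * Real.exp (-(b * t))))
        (t + Real.log (1 - b * ε * Real.exp (-(b * t))) / b) with hWdef
  have hA : ∀ z : ℝ, 0 < z → pdX W z y t = g (z / φ) * (1 / φ) := by
    intro z hz
    exact (hkeyx z hz).deriv
  have hB : ∀ z : ℝ, 0 < z → pdY W x z t = h (z / φ) * (1 / φ) := by
    intro z hz
    exact (hkeyy z hz).deriv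
  have hC : pdXX W x y t = deriv g X * (1 / φ) * (1 / φ) := by
    have hev : (fun z => pdX W z y t) =ᶠ[nhds x] (fun z => g (z / φ) * (1 / φ)) := by
      filter_upwards [eventually_gt_nhds hx] with z hz using hA z hz
    rw [pdXX, hev.deriv_eq]
    have hdiv : HasDerivAt (fun z : ℝ => z / φ) (1 / φ) x := by
      simpa using (hasDerivAt_id x).div_const φ
    have := (hgdiff.hasDerivAt.comp x hdiv).mul_const (1 / φ)
    exact this.deriv
  have hD : pdYY W x y t = deriv h Y * (1 / φ) * (1 / φ) := by
    have hev : (fun z => pdY W x z t) =ᶠ[nhds y] (fun z => h (z / φ) * (1 / φ)) := by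
      filter_upwards [eventually_gt_nhds hy] with z hz using hB z hz
    rw [pdYY, hev.deriv_eq]
    have hdiv : HasDerivAt (fun z : ℝ => z / φ) (1 / φ) y := by
      simpa using (hasDerivAt_id y).div_const φ
    have := (hhdiff.hasDerivAt.comp y hdiv).mul_const (1 / φ)
    exact this.deriv
  -- time derivative
  have hψ : HasDerivAt (fun s : ℝ => 1 - b * ε * Real.exp (-(b * s))) (b * c) t := by
    have h1 : HasDerivAt (fun s : ℝ => -(b * s)) (-b) t := by
      simpa [Pi.neg_def] using ((hasDerivAt_id t).const_mul b).neg
    have h2 := h1.exp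
    have h3 := (h2.const_mul (b * ε)).const_sub 1
    have hd : b * c = -(b * ε * (Real.exp (-(b * t)) * -b)) := by rw [hc]; ring
    rw [hd]
    exact h3
  have hψne : (1 - b * ε * Real.exp (-(b * t))) ≠ 0 := ne_of_gt hφ
  have hγ1 : HasDerivAt (fun s : ℝ => x / (1 - b * ε * Real.exp (-(b * s))))
      (-(x * (b * c)) / φ ^ 2) t := by
    have := (hasDerivAt_const t x).div hψ hψne
    simpa [Pi.div_def] using this
  have hγ2 : HasDerivAt (fun s : ℝ => y / (1 - b * ε * Real.exp (-(b * s))))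
      (-(y * (b * c)) / φ ^ 2) t := by
    have := (hasDerivAt_const t y).div hψ hψne
    simpa [Pi.div_def] using this
  have hγ3 : HasDerivAt
      (fun s : ℝ => s + Real.log (1 - b * ε * Real.exp (-(b * s))) / b)
      (1 + (b * c / φ) / b) t := by
    have hlog : HasDerivAt (fun s : ℝ => Real.log (1 - b * ε * Real.exp (-(b * s))))
        (b * c / φ) t := hψ.log hψne
    exact (hasDerivAt_id t).add (hlog.div_const b)
  have hγ : HasDerivAt (fun s : ℝ =>
      ((x / (1 - b * ε * Real.exp (-(b * s))), y / (1 - b * ε * Real.exp (-(b * s))),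
        s + Real.log (1 - b * ε * Real.exp (-(b * s))) / b) : ℝ × ℝ × ℝ))
      (-(x * (b * c)) / φ ^ 2, -(y * (b * c)) / φ ^ 2, 1 + (b * c / φ) / b) t :=
    hγ1.prodMk (hγ2.prodMk hγ3)
  have hE0 : HasDerivAt (fun s => W x y s)
      (fderiv ℝ (Uf u) (X, Y, T)
        (-(x * (b * c)) / φ ^ 2, -(y * (b * c)) / φ ^ 2, 1 + (b * c / φ) / b)) t :=
    by have := (hdAt X Y T hX hY).hasFDerivAt.comp_hasDerivAt t hγ; exact this
  have hvec : ((-(x * (b * c)) / φ ^ 2, -(y * (b * c)) / φ ^ 2, 1 + (b * c / φ) / b) :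
      ℝ × ℝ × ℝ) = (-(x * (b * c)) / φ ^ 2) • ((1:ℝ), (0:ℝ), (0:ℝ))
      + (-(y * (b * c)) / φ ^ 2) • ((0:ℝ), (1:ℝ), (0:ℝ))
      + (1 + (b * c / φ) / b) • ((0:ℝ), (0:ℝ), (1:ℝ)) := by
    simp [Prod.ext_iff]
  have hE : pdT W x y t = (-(x * (b * c)) / φ ^ 2) * ux + (-(y * (b * c)) / φ ^ 2) * uy
      + (1 + (b * c / φ) / b) * ut := by
    rw [pdT, hE0.deriv, hvec, map_add, map_add, map_smul, map_smul, map_smul,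
      smul_eq_mul, smul_eq_mul, smul_eq_mul]
  -- assemble
  show pdT W x y t = -((a - b * x) * pdX W x y t + (d - b * y) * pdY W x y t
      + x / 2 * pdXX W x y t + y / 2 * pdYY W x y t)
  rw [hE, hC, hD]
  have hAx : pdX W x y t = g X * (1 / φ) := hA x hx
  have hBy : pdY W x y t = h Y * (1 / φ) := hB y hy
  rw [hAx, hBy, ← huxdef, ← huydef, hEq]
  have hc1 : c = 1 - φ := by rw [hφdef]; ring
  rw [hc1, hXdef, hYdef]
  field_simp
  ring
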